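/- Let c > 0, μ ≥ 0, and let (A_r)_{r≥0} be a sequence of reals with A_0 = 0, A_{r+1} > A_r for every r ≥ 0, and A_{r+1} ≤ c (A_{r+1} − A_r)² / (1 + μ A_r) for every r ≥ 0. If μ ≤ 4c, then for every R ≥ 0: A_R ≥ R²/(4c), and moreover if μ > 0, A_R ≥ (1/(4μ)) [ (1 + √(μ/(4c)))^R − (1 − √(μ/(4c)))^R ]². -/

import Mathlib

set_option maxHeartbeats 1000000


/-- Growth of the sequence `A_r`, case `μ ≤ 4c` (Lemma `thm:GrowthOfAr`, first part). -/
theorem growth_of_Ar_small_mu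
    (c μ : ℝ) (hc : 0 < c) (hμ : 0 ≤ μ) (hμc : μ ≤ 4 * c)
    (A : ℕ → ℝ) (hA0 : A 0 = 0)
    (hmono : ∀ r, A r < A (r + 1))
    (hrec : ∀ r, A (r + 1) ≤ c * (A (r + 1) - A r) ^ 2 / (1 + μ * A r)) :
    ∀ R : ℕ,
      (R : ℝ) ^ 2 / (4 * c) ≤ A R ∧
      (0 < μ →
        (1 / (4 * μ)) * ((1 + Real.sqrt (μ / (4 * c))) ^ R
            - (1 - Real.sqrt (μ / (4 * c))) ^ R) ^ 2 ≤ A R) := by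
  have hApos : ∀ r, 0 ≤ A r := by
    intro r
    induction r with
    | zero => simp [hA0]
    | succ n ih => exact ih.trans (hmono n).le
  have hkey : ∀ r, A (r + 1) * (1 + μ * A r) ≤ c * (A (r + 1) - A r) ^ 2 := by
    intro r
    have h1 : 0 < 1 + μ * A r := by nlinarith [mul_nonneg hμ (hApos r)]
    have h2 := hrec r
    rw [le_div_iff₀ h1] at h2
    exact h2
  have hsc : 0 < Real.sqrt c := Real.sqrt_pos.mpr hc
  have hsc2 : (Real.sqrt c) ^ 2 = c := Real.sq_sqrt hc.le
  -- Part 1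
  have part1 : ∀ R : ℕ, (R : ℝ) / (2 * Real.sqrt c) ≤ Real.sqrt (A R) := by
    intro R
    induction R with
    | zero => simp [Real.sqrt_nonneg]
    | succ r ih =>
      have hAr1 : 0 < A (r + 1) := lt_of_le_of_lt (hApos r) (hmono r)
      set x := Real.sqrt (A (r + 1)) with hxdef
      set y := Real.sqrt (A r) with hydef
      have hx2 : x ^ 2 = A (r + 1) := Real.sq_sqrt hAr1.le
      have hy2 : y ^ 2 = A r := Real.sq_sqrt (hApos r)
      have hxpos : 0 < x := Real.sqrt_pos.mpr hAr1
      have hynn : 0 ≤ y := Real.sqrt_nonneg _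
      have hxy : y ≤ x := Real.sqrt_le_sqrt (hmono r).le
      have hd : A (r + 1) ≤ c * (A (r + 1) - A r) ^ 2 := by
        nlinarith [hkey r, mul_nonneg hμ (hApos r)]
      have hdpos : 0 < A (r + 1) - A r := sub_pos.mpr (hmono r)
      have hstep : x / Real.sqrt c ≤ A (r + 1) - A r := by
        have h1 : Real.sqrt (A (r + 1) / c) ≤ Real.sqrt ((A (r + 1) - A r) ^ 2) :=
          Real.sqrt_le_sqrt (by rw [div_le_iff₀ hc]; nlinarith)
        rwa [Real.sqrt_sq hdpos.le, Real.sqrt_div hAr1.le] at h1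
      have hstep' : x ≤ Real.sqrt c * (x ^ 2 - y ^ 2) := by
        rw [div_le_iff₀ hsc] at hstep
        rw [hx2, hy2]
        linarith [hstep]
      have h1 : 1 ≤ 2 * Real.sqrt c * (x - y) := by
        nlinarith [mul_nonneg hsc.le (sq_nonneg (x - y))]
      have ih' : (r : ℝ) ≤ y * (2 * Real.sqrt c) := by
        rwa [div_le_iff₀ (by positivity)] at ih
      rw [div_le_iff₀ (by positivity)]
      push_cast
      nlinarith
  have part1' : ∀ R : ℕ, (R : ℝ) ^ 2 / (4 * c) ≤ A R := by
    intro R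
    have h := part1 R
    have h2 : ((R : ℝ) / (2 * Real.sqrt c)) ^ 2 ≤ A R := by
      have := Real.sqrt_le_sqrt (le_refl (A R))
      nlinarith [Real.sq_sqrt (hApos R), Real.sqrt_nonneg (A R),
        div_nonneg (Nat.cast_nonneg R : (0:ℝ) ≤ R) (by positivity : (0:ℝ) ≤ 2 * Real.sqrt c)]
    calc (R : ℝ) ^ 2 / (4 * c) = ((R : ℝ) / (2 * Real.sqrt c)) ^ 2 := by
          rw [div_pow]; congr 1; rw [mul_pow]; rw [hsc2]; norm_num
      _ ≤ A R := h2
  -- Part 2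
  have part2 : 0 < μ → ∀ R : ℕ,
      ((1 + Real.sqrt (μ / (4 * c))) ^ R - (1 - Real.sqrt (μ / (4 * c))) ^ R) / 2
        ≤ Real.sqrt (μ * A R) := by
    intro hμ'
    set q := Real.sqrt (μ / (4 * c)) with hqdef
    have hq2 : q ^ 2 = μ / (4 * c) := Real.sq_sqrt (by positivity)
    have hqpos : 0 < q := Real.sqrt_pos.mpr (by positivity)
    have hq1 : q ≤ 1 := by
      nlinarith [hq2, div_le_one_of_le₀ (by linarith : μ ≤ 4 * c) (by positivity : (0:ℝ) ≤ 4 * c)]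
    intro R
    induction R with
    | zero => simp [hA0]
    | succ r ih =>
      set S := ((1 + q) ^ r - (1 - q) ^ r) / 2 with hSdef
      set C := ((1 + q) ^ r + (1 - q) ^ r) / 2 with hCdef
      have h1q : (0:ℝ) ≤ 1 - q := by linarith
      have h1q' : (0:ℝ) ≤ 1 + q := by linarith
      have hCnn : 0 ≤ C := by
        have := pow_nonneg h1q r
        have := pow_nonneg h1q' r
        rw [hCdef]; linarith
      have hSnn : 0 ≤ S := by
        have h := pow_le_pow_left₀ h1q (by linarith : 1 - q ≤ 1 + q) r
        rw [hSdef]; linarith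
      have hC2 : C ^ 2 ≤ S ^ 2 + 1 := by
        have h1 : C ^ 2 - S ^ 2 = ((1 + q) * (1 - q)) ^ r := by
          rw [hCdef, hSdef, mul_pow]; ring
        have h2 : ((1 + q) * (1 - q)) ^ r ≤ 1 := by
          apply pow_le_one₀ (by nlinarith) (by nlinarith)
        linarith
      have hSucc : ((1 + q) ^ (r + 1) - (1 - q) ^ (r + 1)) / 2 = S + q * C := by
        rw [hSdef, hCdef, pow_succ, pow_succ]; ring
      have hAr1 : 0 < A (r + 1) := lt_of_le_of_lt (hApos r) (hmono r)
      set b := Real.sqrt (μ * A r) with hbdef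
      set B := Real.sqrt (μ * A (r + 1)) with hBdef
      have hb2 : b ^ 2 = μ * A r := Real.sq_sqrt (mul_nonneg hμ (hApos r))
      have hB2 : B ^ 2 = μ * A (r + 1) := Real.sq_sqrt (mul_nonneg hμ hAr1.le)
      have hBpos : 0 < B := Real.sqrt_pos.mpr (mul_pos hμ' hAr1)
      have hbnn : 0 ≤ b := Real.sqrt_nonneg _
      set s := Real.sqrt (1 + μ * A r) with hsdef
      have hs2 : s ^ 2 = 1 + μ * A r :=
        Real.sq_sqrt (by nlinarith [mul_nonneg hμ (hApos r)])
      have hsnn : 0 ≤ s := Real.sqrt_nonneg _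
      -- main inequality : 2 q B s ≤ μ (A (r+1) - A r)
      have hmain : 2 * q * B * s ≤ μ * (A (r + 1) - A r) := by
        have hdpos : 0 < μ * (A (r + 1) - A r) :=
          mul_pos hμ' (sub_pos.mpr (hmono r))
        have hsq : (2 * q * B * s) ^ 2 ≤ (μ * (A (r + 1) - A r)) ^ 2 := by
          have hk := hkey r
          have e1 : (2 * q * B * s) ^ 2 = 4 * (μ / (4 * c)) * (μ * A (r + 1)) * (1 + μ * A r) := by
            rw [mul_pow, mul_pow, mul_pow, hq2, hB2, hs2]; ring
          rw [e1]
          have e2 : 4 * (μ / (4 * c)) * (μ * A (r + 1)) * (1 + μ * A r)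
              = (μ ^ 2 / c) * (A (r + 1) * (1 + μ * A r)) := by
            field_simp
          rw [e2]
          have e3 : (μ ^ 2 / c) * (A (r + 1) * (1 + μ * A r))
              ≤ (μ ^ 2 / c) * (c * (A (r + 1) - A r) ^ 2) := by
            apply mul_le_mul_of_nonneg_left hk (by positivity)
          calc (μ ^ 2 / c) * (A (r + 1) * (1 + μ * A r))
              ≤ (μ ^ 2 / c) * (c * (A (r + 1) - A r) ^ 2) := e3
            _ = (μ * (A (r + 1) - A r)) ^ 2 := by field_simp
        nlinarith [mul_nonneg (mul_nonneg (mul_nonneg (by norm_num : (0:ℝ) ≤ 2) hqpos.le) hBpos.le) hsnn, hdpos]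
      -- quadratic : b² + 2 q B s ≤ B²
      have hquad : b ^ 2 + 2 * q * B * s ≤ B ^ 2 := by
        rw [hb2, hB2]; linarith
      have hBqs : q * s ≤ B := by
        nlinarith [hquad, hBpos, sq_nonneg b, mul_nonneg hqpos.le hsnn]
      have hroot : q * s + Real.sqrt (q ^ 2 * s ^ 2 + b ^ 2) ≤ B := by
        have h1 : q ^ 2 * s ^ 2 + b ^ 2 ≤ (B - q * s) ^ 2 := by nlinarith
        have h2 : Real.sqrt (q ^ 2 * s ^ 2 + b ^ 2) ≤ B - q * s := by
          have := Real.sqrt_le_sqrt h1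
          rwa [Real.sqrt_sq (by linarith)] at this
        linarith
      have hsC : C ≤ s := by
        have hbS : S ≤ b := ih
        have h1 : C ^ 2 ≤ s ^ 2 := by nlinarith
        nlinarith
      have hbr : b ≤ Real.sqrt (q ^ 2 * s ^ 2 + b ^ 2) := by
        have h1 : b ^ 2 ≤ q ^ 2 * s ^ 2 + b ^ 2 := by nlinarith [sq_nonneg (q * s)]
        have := Real.sqrt_le_sqrt h1
        rwa [Real.sqrt_sq hbnn] at this
      rw [hSucc]
      have : q * C ≤ q * s := mul_le_mul_of_nonneg_left hsC hqpos.le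
      have hbS : S ≤ b := ih
      linarith
  intro R
  refine ⟨part1' R, fun hμ' => ?_⟩
  have h := part2 hμ' R
  set q := Real.sqrt (μ / (4 * c)) with hqdef
  set S := ((1 + q) ^ R - (1 - q) ^ R) / 2 with hSdef
  have hqpos : 0 < q := Real.sqrt_pos.mpr (by positivity)
  have hq1 : q ≤ 1 := by
    have hq2 : q ^ 2 = μ / (4 * c) := Real.sq_sqrt (by positivity)
    nlinarith [div_le_one_of_le₀ (by linarith : μ ≤ 4 * c) (by positivity : (0:ℝ) ≤ 4 * c)]
  have hSnn : 0 ≤ S := by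
    have hh := pow_le_pow_left₀ (by linarith : (0:ℝ) ≤ 1 - q) (by linarith : 1 - q ≤ 1 + q) R
    rw [hSdef]; linarith
  have hS2 : S ^ 2 ≤ μ * A R := by
    nlinarith [Real.sq_sqrt (mul_nonneg hμ (hApos R)), Real.sqrt_nonneg (μ * A R)]
  rw [hSdef] at hS2
  rw [one_div, inv_mul_le_iff₀ (by positivity : (0:ℝ) < 4 * μ)]
  nlinarith [hS2]
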